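/- For φ ∈ ℍ², with φ·φ = 2·(φφ†) (no trace reversal), one has (φ·φ)~ φ = 0, where ~ denotes trace reversal; this is the 3-ψ's rule for negative-chirality spinors. -/

import Mathlib

open Matrix

/-- The outer product `φφ†` of two quaternionic 2-component spinors. -/
noncomputable def qouter (ψ φ : Fin 2 → Quaternion ℝ) : Matrix (Fin 2) (Fin 2) (Quaternion ℝ) :=
  Matrix.of fun i j => ψ i * star (φ j)

/-- Trace reversal `M̃ = M - (tr M)·1`. -/
noncomputable def qtilde (M : Matrix (Fin 2) (Fin 2) (Quaternion ℝ)) :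
    Matrix (Fin 2) (Fin 2) (Quaternion ℝ) :=
  M - (Matrix.trace M) • (1 : Matrix (Fin 2) (Fin 2) (Quaternion ℝ))

/-- The 3-ψ's rule for negative-chirality spinors over ℍ: with `φ·φ = 2 φφ†`
(no trace reversal), the trace reversal `(φ·φ)~` annihilates `φ`. -/
theorem three_psis_rule_negative_chirality (φ : Fin 2 → Quaternion ℝ) :
    qtilde ((2 : ℝ) • qouter φ φ) *ᵥ φ = 0 := by
  ext i : 1
  fin_cases i <;>
  · simp [qtilde, qouter, mulVec, dotProduct, Fin.sum_univ_two, Matrix.trace,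
      Matrix.one_apply, Matrix.diag, Quaternion.ext_iff] <;> ring_nf <;> exact ⟨rfl, rfl, rfl, rfl⟩
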